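/- Let f : A^n → B and let τ : Fin n → Fin m. If the i-th argument of f is inessential for every i outside a set S ⊆ Fin n, and τ restricted to S is injective, then every argument of f is 'simulated' in the minor: for all a, b : Fin m → A agreeing on τ(S), we have f(a ∘ τ) = f(b ∘ τ). -/
import Mathlib


/-- If every argument of `f` outside `S` is inessential and `τ` is injective on
`S`, then for all `a b : Fin m → A` agreeing on `τ '' S`, `f (a ∘ τ) = f (b ∘ τ)`. -/
theorem stmt_19 (A B : Type*) (n m : ℕ) (f : (Fin n → A) → B)
    (τ : Fin n → Fin m) (S : Set (Fin n))
    (hS : ∀ i ∉ S, ∀ a b : Fin n → A, (∀ j, j ≠ i → a j = b j) → f a = f b)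
    (hτ : Set.InjOn τ S) :
    ∀ a b : Fin m → A, (∀ j ∈ τ '' S, a j = b j) → f (a ∘ τ) = f (b ∘ τ) := by
  intro a b hab
  -- a ∘ τ and b ∘ τ agree on S
  have hagree : ∀ i ∈ S, (a ∘ τ) i = (b ∘ τ) i := fun i hi =>
    hab (τ i) ⟨i, hi, rfl⟩
  -- key: if two tuples agree on S, f gives the same value
  set y : Fin n → A := b ∘ τ with hy
  have key : ∀ (D : Finset (Fin n)) (x : Fin n → A), (∀ i ∈ S, x i = y i) →
      (∀ j, x j ≠ y j → j ∈ D) → f x = f y := by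
    intro D
    induction D using Finset.strongInduction with
    | _ D ih =>
      intro x hxS hD
      by_cases h : ∀ j, x j = y j
      · exact congrArg f (funext h)
      · push_neg at h
        obtain ⟨i, hi⟩ := h
        have hiS : i ∉ S := fun hS' => hi (hxS i hS')
        have hiD : i ∈ D := hD i hi
        have step : f x = f (Function.update x i (y i)) :=
          hS i hiS _ _ (fun j hj => (Function.update_of_ne hj _ _).symm)
        rw [step]
        refine ih (D.erase i) (Finset.erase_ssubset hiD) _ ?_ ?_
        · intro j hjS
          rw [Function.update_apply]
          split
          · next h' => subst h'; rfl
          · exact hxS j hjS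
        · intro j hj
          rcases eq_or_ne j i with rfl | hne
          · simp [Function.update_self] at hj
          · exact Finset.mem_erase.2
              ⟨hne, hD j (by simpa [Function.update_of_ne hne] using hj)⟩
  exact key Finset.univ (a ∘ τ) hagree (fun j _ => Finset.mem_univ j)
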